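/- If v ∈ L²(𝕋^d) satisfies v(ξ) = ∫_{ℝ^d} a(ξ−η) v(η) dη for almost every ξ (with v extended ℤ^d-periodically), then v is constant almost everywhere. Equivalently, 0 is a simple eigenvalue of the operator B on L²(𝕋^d) defined by (Bv)(ξ) = v(ξ) − ∫_{ℝ^d} a(ξ−η) v(η) dη. -/

import Mathlib

open MeasureTheory
open scoped ENNReal

set_option maxHeartbeats 1000000

noncomputable section

/-- The periodicity cell `[0,1)^d`, identified with the torus `𝕋^d`. -/
def cube (d : ℕ) : Set (Fin d → ℝ) := Set.univ.pi fun _ => Set.Ico (0 : ℝ) 1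

namespace Stmt5Aux

theorem cube_fd (d : ℕ) :
    IsAddFundamentalDomain
      (Submodule.span ℤ (Set.range (Pi.basisFun ℝ (Fin d)))).toAddSubgroup (cube d)
      (volume : Measure (Fin d → ℝ)) := by
  have h := ZSpan.isAddFundamentalDomain' (Pi.basisFun ℝ (Fin d)) (volume : Measure (Fin d → ℝ))
  rwa [ZSpan.fundamentalDomain_pi_basisFun] at h

theorem coord_int {d : ℕ} {x : Fin d → ℝ}
    (hx : x ∈ Submodule.span ℤ (Set.range (Pi.basisFun ℝ (Fin d)))) :
    ∃ k : Fin d → ℤ, x = fun i => (k i : ℝ) := by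
  induction hx using Submodule.span_induction with
  | mem x hmem =>
      obtain ⟨j, rfl⟩ := hmem
      refine ⟨Pi.single j 1, ?_⟩
      funext i
      by_cases h : i = j <;> simp [Pi.basisFun_apply, Pi.single_apply, h]
  | zero => exact ⟨0, by funext i; simp⟩
  | add x y _ _ hx hy =>
      obtain ⟨k, rfl⟩ := hx
      obtain ⟨l, rfl⟩ := hy
      exact ⟨k + l, by funext i; simp⟩
  | smul n x _ hx =>
      obtain ⟨k, rfl⟩ := hx
      refine ⟨n • k, ?_⟩
      funext i
      simp [zsmul_eq_mul]

theorem vadd_eq {d : ℕ}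
    (g : (Submodule.span ℤ (Set.range (Pi.basisFun ℝ (Fin d)))).toAddSubgroup)
    (x : Fin d → ℝ) : g +ᵥ x = (g : Fin d → ℝ) + x := rfl

instance countableL (d : ℕ) :
    Countable ((Submodule.span ℤ (Set.range (Pi.basisFun ℝ (Fin d)))).toAddSubgroup) :=
  Countable.of_equiv (↥(Submodule.span ℤ (Set.range ⇑(Pi.basisFun ℝ (Fin d)))))
    ⟨fun g => ⟨g.1, g.2⟩, fun g => ⟨g.1, g.2⟩, fun _ => rfl, fun _ => rfl⟩

end Stmt5Aux

open Stmt5Aux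

/-- If `v ∈ L²(𝕋^d)` satisfies `v(ξ) = ∫_{ℝ^d} a(ξ-η) v(η) dη` for a.e. `ξ` (with `v`
extended `ℤ^d`-periodically), then `v` is constant almost everywhere; i.e. `0` is a
simple eigenvalue of `B v = v - a * v` on `L²(𝕋^d)`. -/
theorem stmt5 {d : ℕ} (hd : 1 ≤ d)
    (a : (Fin d → ℝ) → ℝ) (hameas : Measurable a) (haint : Integrable a)
    (hanonneg : ∀ z, 0 ≤ a z) (hamass : ∫ z, a z = 1)
    (hasymm : ∀ z, a (-z) = a z)
    (v : (Fin d → ℝ) → ℝ) (hvmeas : Measurable v)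
    (hvper : ∀ ξ, ∀ k : Fin d → ℤ, v (ξ + fun i => (k i : ℝ)) = v ξ)
    (hvL2 : IntegrableOn (fun ξ => (v ξ) ^ 2) (cube d))
    (heig : ∀ᵐ ξ ∂(volume : Measure (Fin d → ℝ)), v ξ = ∫ η, a (ξ - η) * v η) :
    ∃ c : ℝ, ∀ᵐ ξ ∂(volume : Measure (Fin d → ℝ)), v ξ = c := by
  classical
  have hfd := cube_fd d
  set L := (Submodule.span ℤ (Set.range (Pi.basisFun ℝ (Fin d)))).toAddSubgroup with hLdef
  -- periodicity of v under L
  have hvperL : ∀ (g : L) (x : Fin d → ℝ), v ((g : Fin d → ℝ) + x) = v x := by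
    intro g x
    obtain ⟨k, hk⟩ := coord_int ((Submodule.mem_toAddSubgroup _).mp g.2)
    rw [hk, add_comm]
    exact hvper x k
  set oa : (Fin d → ℝ) → ℝ≥0∞ := fun z => ENNReal.ofReal (a z) with hoadef
  have hoa_meas : Measurable oa := hameas.ennreal_ofReal
  have hoa_int : ∫⁻ z, oa z = 1 := by
    rw [← ofReal_integral_eq_lintegral_ofReal haint (ae_of_all _ hanonneg), hamass,
      ENNReal.ofReal_one]
  have hoa_translate : ∀ η : Fin d → ℝ, (∫⁻ ζ, oa (ζ - η)) = 1 := by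
    intro η
    simp_rw [sub_eq_add_neg]
    rw [lintegral_add_right_eq_self oa (-η)]
    exact hoa_int
  -- the periodization identity
  have hperiodize : ∀ F : (Fin d → ℝ) → ℝ≥0∞, Measurable F →
      (∀ (g : L) (x : Fin d → ℝ), F ((g : Fin d → ℝ) + x) = F x) →
      ∫⁻ ξ in cube d, ∫⁻ η, oa (ξ - η) * F η = ∫⁻ η in cube d, F η := by
    intro F hFmeas hFper
    have hmeas2 : ∀ g : L, Measurable fun p : (Fin d → ℝ) × (Fin d → ℝ) =>
        oa (p.1 - ((g : Fin d → ℝ) + p.2)) * F p.2 := by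
      intro g
      exact ((hoa_meas.comp (measurable_fst.sub (measurable_const.add measurable_snd))).mul
        (hFmeas.comp measurable_snd))
    calc
      ∫⁻ ξ in cube d, ∫⁻ η, oa (ξ - η) * F η
          = ∫⁻ ξ in cube d, ∑' g : L, ∫⁻ η in cube d,
              oa (ξ - ((g : Fin d → ℝ) + η)) * F η := by
            refine lintegral_congr fun ξ => ?_
            rw [hfd.lintegral_eq_tsum'' (fun η => oa (ξ - η) * F η)]
            refine tsum_congr fun g => lintegral_congr fun η => ?_
            rw [vadd_eq, hFper g η]
      _ = ∑' g : L, ∫⁻ ξ in cube d, ∫⁻ η in cube d,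
              oa (ξ - ((g : Fin d → ℝ) + η)) * F η := by
            refine lintegral_tsum fun g => ?_
            refine Measurable.aemeasurable ?_
            exact Measurable.lintegral_prod_right'
              (f := fun p : (Fin d → ℝ) × (Fin d → ℝ) =>
                oa (p.1 - ((g : Fin d → ℝ) + p.2)) * F p.2) (hmeas2 g)
      _ = ∑' g : L, ∫⁻ η in cube d,
              (∫⁻ ξ in cube d, oa (ξ - ((g : Fin d → ℝ) + η))) * F η := by
            refine tsum_congr fun g => ?_
            rw [lintegral_lintegral_swap (hmeas2 g).aemeasurable]
            refine lintegral_congr fun η => ?_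
            exact lintegral_mul_const
              (f := fun ξ => oa (ξ - ((g : Fin d → ℝ) + η))) _
              (hoa_meas.comp (measurable_id.sub measurable_const))
      _ = ∫⁻ η in cube d,
              (∑' g : L, ∫⁻ ξ in cube d, oa (ξ - ((g : Fin d → ℝ) + η))) * F η := by
            refine Eq.symm ?_
            have : ∀ η : Fin d → ℝ,
                (∑' g : L, ∫⁻ ξ in cube d, oa (ξ - ((g : Fin d → ℝ) + η))) * F η
                = ∑' g : L, (∫⁻ ξ in cube d, oa (ξ - ((g : Fin d → ℝ) + η))) * F η := by
              intro η
              rw [ENNReal.tsum_mul_right]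
            simp_rw [this]
            refine lintegral_tsum fun g => ?_
            refine Measurable.aemeasurable ?_
            refine Measurable.mul ?_ hFmeas
            exact Measurable.lintegral_prod_right'
              (f := fun p : (Fin d → ℝ) × (Fin d → ℝ) =>
                oa (p.2 - ((g : Fin d → ℝ) + p.1)))
              (hoa_meas.comp (measurable_snd.sub (measurable_const.add measurable_fst)))
      _ = ∫⁻ η in cube d, F η := by
            refine lintegral_congr fun η => ?_
            have h2 := hfd.lintegral_eq_tsum' (fun ζ => oa (ζ - η))
            have h3 : (∑' g : L, ∫⁻ ξ in cube d, (fun ζ => oa (ζ - η)) (-g +ᵥ ξ))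
                = ∑' g : L, ∫⁻ ξ in cube d, oa (ξ - ((g : Fin d → ℝ) + η)) := by
              refine tsum_congr fun g => lintegral_congr fun ξ => ?_
              have he : (-g +ᵥ ξ) - η = ξ - ((g : Fin d → ℝ) + η) := by
                rw [vadd_eq]
                simp only [AddSubgroup.coe_neg]
                abel
              exact congrArg oa he
            rw [h3, hoa_translate η] at h2
            rw [← h2, one_mul]
  -- ov2
  set ov2 : (Fin d → ℝ) → ℝ≥0∞ := fun x => ENNReal.ofReal (v x ^ 2) with hov2def
  have hov2meas : Measurable ov2 := (hvmeas.pow_const 2).ennreal_ofReal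
  have hov2per : ∀ (g : L) (x : Fin d → ℝ), ov2 ((g : Fin d → ℝ) + x) = ov2 x := by
    intro g x
    show ENNReal.ofReal (v ((g : Fin d → ℝ) + x) ^ 2) = ENNReal.ofReal (v x ^ 2)
    rw [hvperL g x]
  set M := ∫⁻ η in cube d, ov2 η with hMdef
  have hMlt : M < ⊤ := by
    have h := hvL2.hasFiniteIntegral
    rw [HasFiniteIntegral] at h
    refine lt_of_le_of_lt (le_of_eq ?_) h
    refine lintegral_congr fun η => ?_
    exact (Real.enorm_eq_ofReal (sq_nonneg _)).symm
  set I1 : (Fin d → ℝ) → ℝ≥0∞ := fun ξ => ∫⁻ η, oa (ξ - η) * ov2 η with hI1def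
  have hI1meas : Measurable I1 :=
    Measurable.lintegral_prod_right'
      (f := fun p : (Fin d → ℝ) × (Fin d → ℝ) => oa (p.1 - p.2) * ov2 p.2)
      ((hoa_meas.comp (measurable_fst.sub measurable_snd)).mul (hov2meas.comp measurable_snd))
  have h1 : ∫⁻ ξ in cube d, I1 ξ = M := hperiodize ov2 hov2meas hov2per
  have hI1per : ∀ (g : L) (ξ : Fin d → ℝ), I1 ((g : Fin d → ℝ) + ξ) = I1 ξ := by
    intro g ξ
    have h := lintegral_add_left_eq_self (μ := (volume : Measure (Fin d → ℝ)))
      (fun η => oa ((g : Fin d → ℝ) + ξ - η) * ov2 η) (g : Fin d → ℝ)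
    rw [show I1 ((g : Fin d → ℝ) + ξ) = ∫⁻ η, oa ((g : Fin d → ℝ) + ξ - η) * ov2 η from rfl, ← h]
    refine lintegral_congr fun η => ?_
    rw [add_sub_add_left_eq_sub, hov2per g η]
  -- extension lemma
  have hextend : ∀ S : Set (Fin d → ℝ), MeasurableSet S →
      (∀ (g : L) (x : Fin d → ℝ), ((g : Fin d → ℝ) + x ∈ S ↔ x ∈ S)) →
      (volume.restrict (cube d)) S = 0 → volume S = 0 := by
    intro S hSm hSper hS0
    have h := hfd.lintegral_eq_tsum'' (S.indicator 1)
    rw [lintegral_indicator_one hSm] at h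
    rw [h]
    have hz : ∀ g : L, ∫⁻ x in cube d, S.indicator 1 (g +ᵥ x) = 0 := by
      intro g
      have hind : ∀ x : Fin d → ℝ, S.indicator (1 : (Fin d → ℝ) → ℝ≥0∞) (g +ᵥ x)
          = S.indicator 1 x := by
        intro x
        rw [vadd_eq]
        by_cases hx : x ∈ S
        · rw [Set.indicator_of_mem hx, Set.indicator_of_mem ((hSper g x).mpr hx)]
          rfl
        · rw [Set.indicator_of_notMem hx,
            Set.indicator_of_notMem (fun h' => hx ((hSper g x).mp h'))]
      simp_rw [hind]
      rw [lintegral_indicator_one hSm]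
      exact hS0
    simp_rw [hz]
    simp
  -- a.e. finiteness of I1
  have hI1fin : ∀ᵐ ξ ∂(volume : Measure (Fin d → ℝ)), I1 ξ < ⊤ := by
    have hcube : ∀ᵐ ξ ∂(volume.restrict (cube d)), I1 ξ < ⊤ :=
      ae_lt_top hI1meas (by rw [h1]; exact hMlt.ne)
    have hres : (volume.restrict (cube d)) {ξ | I1 ξ = ⊤} = 0 := by
      have h := ae_iff.mp hcube
      convert h using 2
      ext ξ
      simp [lt_top_iff_ne_top]
    have hS := hextend {ξ | I1 ξ = ⊤} (hI1meas (measurableSet_singleton ⊤))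
      (fun g x => by simp only [Set.mem_setOf_eq, hI1per g x]) hres
    rw [ae_iff]
    convert hS using 2
    ext ξ
    simp [lt_top_iff_ne_top]
  -- the defect function D
  set D : (Fin d → ℝ) → ℝ≥0∞ :=
    fun ξ => ∫⁻ η, oa (ξ - η) * ENNReal.ofReal ((v η - v ξ) ^ 2) with hDdef
  have hDmeas : Measurable D :=
    Measurable.lintegral_prod_right'
      (f := fun p : (Fin d → ℝ) × (Fin d → ℝ) =>
        oa (p.1 - p.2) * ENNReal.ofReal ((v p.2 - v p.1) ^ 2))
      ((hoa_meas.comp (measurable_fst.sub measurable_snd)).mul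
        ((((hvmeas.comp measurable_snd).sub
          (hvmeas.comp measurable_fst)).pow_const 2).ennreal_ofReal))
  -- pointwise key identity
  have hkey : ∀ᵐ ξ ∂(volume : Measure (Fin d → ℝ)), D ξ + ov2 ξ = I1 ξ := by
    filter_upwards [heig, hI1fin] with ξ hξeig hξfin
    set g1 : (Fin d → ℝ) → ℝ := fun η => a (ξ - η) * v η ^ 2 with hg1def
    have hg1meas : Measurable g1 :=
      (hameas.comp (measurable_const.sub measurable_id)).mul (hvmeas.pow_const 2)
    have hg1nn : ∀ η, 0 ≤ g1 η := fun η => mul_nonneg (hanonneg _) (sq_nonneg _)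
    have hofg1 : ∀ η, ENNReal.ofReal (g1 η) = oa (ξ - η) * ov2 η :=
      fun η => ENNReal.ofReal_mul (hanonneg _)
    have hI1lint : I1 ξ = ∫⁻ η, ENNReal.ofReal (g1 η) :=
      lintegral_congr fun η => (hofg1 η).symm
    have hg1int : Integrable g1 := by
      refine ⟨hg1meas.aestronglyMeasurable, ?_⟩
      rw [HasFiniteIntegral]
      calc ∫⁻ η, ‖g1 η‖₊ = ∫⁻ η, ENNReal.ofReal (g1 η) :=
            lintegral_congr fun η => Real.enorm_eq_ofReal (hg1nn η)
        _ = I1 ξ := hI1lint.symm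
        _ < ⊤ := hξfin
    have hI1eq : I1 ξ = ENNReal.ofReal (∫ η, g1 η) := by
      rw [ofReal_integral_eq_lintegral_ofReal hg1int (ae_of_all _ hg1nn)]
      exact hI1lint
    have hmp : MeasurePreserving (fun η : Fin d → ℝ => ξ - η) volume volume :=
      Measure.measurePreserving_sub_left volume ξ
    have hemb : MeasurableEmbedding (fun η : Fin d → ℝ => ξ - η) :=
      (MeasurableEquiv.subLeft ξ).measurableEmbedding
    have hg2int : Integrable (fun η : Fin d → ℝ => a (ξ - η)) :=
      (hmp.integrable_comp_emb hemb).mpr haint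
    have hg2val : ∫ η : Fin d → ℝ, a (ξ - η) = 1 := by
      rw [hmp.integral_comp hemb a]
      exact hamass
    have hg3int : Integrable (fun η : Fin d → ℝ => a (ξ - η) * v η) := by
      refine Integrable.mono' (hg2int.add hg1int)
        (((hameas.comp (measurable_const.sub measurable_id)).mul hvmeas).aestronglyMeasurable)
        (ae_of_all _ fun η => ?_)
      have habs : |v η| ≤ 1 + v η ^ 2 := by
        nlinarith [abs_nonneg (v η), sq_abs (v η), sq_nonneg (abs (v η) - 1)]
      show ‖a (ξ - η) * v η‖ ≤ a (ξ - η) + g1 η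
      calc ‖a (ξ - η) * v η‖ = a (ξ - η) * |v η| := by
            rw [norm_mul, Real.norm_eq_abs, Real.norm_eq_abs, abs_of_nonneg (hanonneg _)]
        _ ≤ a (ξ - η) * (1 + v η ^ 2) := mul_le_mul_of_nonneg_left habs (hanonneg _)
        _ = a (ξ - η) + g1 η := by rw [hg1def]; ring
    have hfuneq : (fun η => a (ξ - η) * (v η - v ξ) ^ 2)
        = fun η => g1 η - 2 * v ξ * (a (ξ - η) * v η) + v ξ ^ 2 * a (ξ - η) := by
      funext η; rw [hg1def]; ring
    have hgint : Integrable (fun η => a (ξ - η) * (v η - v ξ) ^ 2) := by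
      rw [hfuneq]
      exact (hg1int.sub (hg3int.const_mul _)).add (hg2int.const_mul _)
    have hDval : D ξ = ENNReal.ofReal (∫ η, a (ξ - η) * (v η - v ξ) ^ 2) := by
      rw [ofReal_integral_eq_lintegral_ofReal hgint
        (ae_of_all _ fun η => mul_nonneg (hanonneg _) (sq_nonneg _))]
      exact lintegral_congr fun η => (ENNReal.ofReal_mul (hanonneg _)).symm
    have hint1 : Integrable (fun η => g1 η - 2 * v ξ * (a (ξ - η) * v η)) :=
      hg1int.sub (hg3int.const_mul _)
    have hint2 : Integrable (fun η : Fin d → ℝ => v ξ ^ 2 * a (ξ - η)) :=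
      hg2int.const_mul _
    have hint3 : Integrable (fun η : Fin d → ℝ => 2 * v ξ * (a (ξ - η) * v η)) :=
      hg3int.const_mul _
    have hexp : ∫ η, a (ξ - η) * (v η - v ξ) ^ 2 = (∫ η, g1 η) - v ξ ^ 2 := by
      rw [hfuneq, integral_add hint1 hint2, integral_sub hg1int hint3,
        integral_const_mul, integral_const_mul, ← hξeig, hg2val]
      ring
    have hnn : 0 ≤ (∫ η, g1 η) - v ξ ^ 2 := by
      rw [← hexp]
      exact integral_nonneg fun η => mul_nonneg (hanonneg _) (sq_nonneg _)
    rw [hDval, hexp, hI1eq]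
    show ENNReal.ofReal _ + ENNReal.ofReal (v ξ ^ 2) = _
    rw [← ENNReal.ofReal_add hnn (sq_nonneg _), sub_add_cancel]
  -- D is periodic
  have hDper : ∀ (g : L) (ξ : Fin d → ℝ), D ((g : Fin d → ℝ) + ξ) = D ξ := by
    intro g ξ
    have h := lintegral_add_left_eq_self (μ := (volume : Measure (Fin d → ℝ)))
      (fun η => oa ((g : Fin d → ℝ) + ξ - η)
        * ENNReal.ofReal ((v η - v ((g : Fin d → ℝ) + ξ)) ^ 2)) (g : Fin d → ℝ)
    rw [show D ((g : Fin d → ℝ) + ξ) = ∫⁻ η, oa ((g : Fin d → ℝ) + ξ - η)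
      * ENNReal.ofReal ((v η - v ((g : Fin d → ℝ) + ξ)) ^ 2) from rfl, ← h]
    refine lintegral_congr fun η => ?_
    rw [add_sub_add_left_eq_sub, hvperL g η, hvperL g ξ]
  -- integral of D over cube is zero
  have hDcube0 : ∫⁻ ξ in cube d, D ξ = 0 := by
    have hcongr : ∫⁻ ξ in cube d, (D ξ + ov2 ξ) = ∫⁻ ξ in cube d, I1 ξ :=
      lintegral_congr_ae (ae_restrict_of_ae hkey)
    rw [lintegral_add_left hDmeas, h1, ← hMdef] at hcongr
    have h0 : (∫⁻ ξ in cube d, D ξ) + M = 0 + M := by rw [zero_add]; exact hcongr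
    exact (ENNReal.add_left_inj hMlt.ne).mp h0
  -- D vanishes a.e. on ℝ^d
  have hD0 : ∀ᵐ ξ ∂(volume : Measure (Fin d → ℝ)), D ξ = 0 := by
    have hres : (volume.restrict (cube d)) {ξ | D ξ ≠ 0} = 0 := by
      have h := (lintegral_eq_zero_iff hDmeas).mp hDcube0
      rw [Filter.EventuallyEq, ae_iff] at h
      convert h using 2
      rfl
    have hS := hextend {ξ | D ξ ≠ 0}
      ((hDmeas (measurableSet_singleton 0)).compl)
      (fun g x => by simp only [Set.mem_setOf_eq, hDper g x]) hres
    rw [ae_iff]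
    convert hS using 2
  -- a.e. pointwise alternative
  have hae2 : ∀ᵐ ξ ∂(volume : Measure (Fin d → ℝ)),
      ∀ᵐ η ∂(volume : Measure (Fin d → ℝ)), a (ξ - η) = 0 ∨ v η = v ξ := by
    filter_upwards [hD0] with ξ hξ
    have hmeasin : Measurable fun η => oa (ξ - η) * ENNReal.ofReal ((v η - v ξ) ^ 2) :=
      (hoa_meas.comp (measurable_const.sub measurable_id)).mul
        (((hvmeas.sub measurable_const).pow_const 2).ennreal_ofReal)
    have h := (lintegral_eq_zero_iff hmeasin).mp hξ
    filter_upwards [h] with η hη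
    simp only [Pi.zero_apply] at hη
    rcases mul_eq_zero.mp hη with h' | h'
    · left
      have hle := ENNReal.ofReal_eq_zero.mp h'
      exact le_antisymm hle (hanonneg _)
    · right
      have h2 := ENNReal.ofReal_eq_zero.mp h'
      have h3 : (v η - v ξ) ^ 2 = 0 := le_antisymm h2 (sq_nonneg _)
      have h4 := pow_eq_zero_iff (n := 2) (by norm_num) |>.mp h3
      linarith [sub_eq_zero.mp h4]
  -- Fubini transfer: the bad set in product space
  set SQ : Set ((Fin d → ℝ) × (Fin d → ℝ)) := {p | a (p.1 - p.2) ≠ 0 ∧ v p.2 ≠ v p.1}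
    with hSQdef
  have hSQm : MeasurableSet SQ := by
    refine MeasurableSet.inter ?_ ?_
    · exact ((hameas.comp (measurable_fst.sub measurable_snd))
        (measurableSet_singleton 0)).compl
    · exact (measurableSet_eq_fun (hvmeas.comp measurable_snd)
        (hvmeas.comp measurable_fst)).compl
  have hSQ0 : (volume.prod volume) SQ = 0 := by
    rw [Measure.measure_prod_null hSQm]
    filter_upwards [hae2] with ξ hξ
    have hpr : Prod.mk ξ ⁻¹' SQ = {η | ¬ (a (ξ - η) = 0 ∨ v η = v ξ)} := by
      ext η; simp [hSQdef, not_or]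
    rw [hpr]
    exact ae_iff.mp hξ
  -- the shear map U (z, ξ) ↦ (ξ, -z + ξ)
  have hU : MeasurePreserving (fun p : (Fin d → ℝ) × (Fin d → ℝ) => (p.2, -p.1 + p.2))
      (volume.prod volume) (volume.prod volume) := by
    have h1 : MeasurePreserving (Prod.swap : ((Fin d → ℝ) × (Fin d → ℝ)) → _)
        (volume.prod volume) (volume.prod volume) := Measure.measurePreserving_swap
    have h2 : MeasurePreserving
        (Prod.map (id : (Fin d → ℝ) → _) (Neg.neg : (Fin d → ℝ) → _))
        (volume.prod volume) (volume.prod volume) :=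
      (MeasurePreserving.id _).prod (Measure.measurePreserving_neg _)
    have h3 := measurePreserving_prod_add_right
      (volume : Measure (Fin d → ℝ)) (volume : Measure (Fin d → ℝ))
    exact h3.comp (h2.comp h1)
  have hU0 : (volume.prod volume)
      ((fun p : (Fin d → ℝ) × (Fin d → ℝ) => (p.2, -p.1 + p.2)) ⁻¹' SQ) = 0 := by
    rw [hU.measure_preimage hSQm.nullMeasurableSet]
    exact hSQ0
  have hpre : (fun p : (Fin d → ℝ) × (Fin d → ℝ) => (p.2, -p.1 + p.2)) ⁻¹' SQ
      = {p : (Fin d → ℝ) × (Fin d → ℝ) | a p.1 ≠ 0 ∧ v (p.2 - p.1) ≠ v p.2} := by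
    ext p
    have e1 : p.2 - (-p.1 + p.2) = p.1 := by abel
    have e2 : -p.1 + p.2 = p.2 - p.1 := by abel
    simp only [hSQdef, Set.mem_preimage, Set.mem_setOf_eq, e1, e2, sub_sub_cancel]
  have haez : ∀ᵐ z ∂(volume : Measure (Fin d → ℝ)),
      a z = 0 ∨ ∀ᵐ ξ ∂(volume : Measure (Fin d → ℝ)), v (ξ - z) = v ξ := by
    rw [hpre] at hU0
    have hm2 : MeasurableSet {p : (Fin d → ℝ) × (Fin d → ℝ) |
        a p.1 ≠ 0 ∧ v (p.2 - p.1) ≠ v p.2} := by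
      refine MeasurableSet.inter ?_ ?_
      · exact ((hameas.comp measurable_fst) (measurableSet_singleton 0)).compl
      · exact (measurableSet_eq_fun (hvmeas.comp (measurable_snd.sub measurable_fst))
          (hvmeas.comp measurable_snd)).compl
    have h := (Measure.measure_prod_null hm2).mp hU0
    filter_upwards [h] with z hz
    by_cases hza : a z = 0
    · exact Or.inl hza
    · right
      rw [ae_iff]
      convert hz using 2
      ext ξ
      simp [hza]
      rfl
  -- translation of a.e. statements
  have htrans : ∀ (w : Fin d → ℝ) (P : (Fin d → ℝ) → Prop),
      (∀ᵐ ξ ∂(volume : Measure (Fin d → ℝ)), P ξ) →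
      ∀ᵐ ξ ∂(volume : Measure (Fin d → ℝ)), P (ξ + w) := by
    intro w P hP
    exact (measurePreserving_add_right volume w).quasiMeasurePreserving.ae hP
  -- the subgroup of good translations
  set Tset : Set (Fin d → ℝ) :=
    {z | ∀ᵐ ξ ∂(volume : Measure (Fin d → ℝ)), v (ξ + z) = v ξ} with hTdef
  have hsub_mem : ∀ z : Fin d → ℝ,
      (∀ᵐ ξ ∂(volume : Measure (Fin d → ℝ)), v (ξ - z) = v ξ) → z ∈ Tset := by
    intro z hz
    rw [hTdef, Set.mem_setOf_eq]
    have h2 := htrans z _ hz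
    filter_upwards [h2] with ξ h
    rw [add_sub_cancel_right] at h
    exact h.symm
  have hTadd : ∀ y w : Fin d → ℝ, y ∈ Tset → w ∈ Tset → y + w ∈ Tset := by
    intro y w hy hw
    rw [hTdef, Set.mem_setOf_eq]
    rw [hTdef, Set.mem_setOf_eq] at hy hw
    have h1 := htrans w _ hy
    filter_upwards [h1, hw] with ξ ha hb
    have he : ξ + (y + w) = ξ + w + y := by abel
    rw [he, ha, hb]
  have hTneg : ∀ y : Fin d → ℝ, y ∈ Tset → -y ∈ Tset := by
    intro y hy
    rw [hTdef, Set.mem_setOf_eq]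
    rw [hTdef, Set.mem_setOf_eq] at hy
    have h1 := htrans (-y) _ hy
    filter_upwards [h1] with ξ h
    have he : ξ + -y + y = ξ := by abel
    rw [he] at h
    exact h.symm
  have hTzero : (0 : Fin d → ℝ) ∈ Tset := by
    rw [hTdef, Set.mem_setOf_eq]
    refine ae_of_all _ fun ξ => ?_
    rw [add_zero]
  -- positivity of the support of a
  have hApos : 0 < volume {z | a z ≠ 0} := by
    rcases (zero_le : 0 ≤ volume {z | a z ≠ 0}).lt_or_eq with h | h
    · exact h
    · exfalso
      have hz : ∀ᵐ z ∂(volume : Measure (Fin d → ℝ)), a z = 0 := by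
        rw [ae_iff]
        exact h.symm
      have h0 : ∫ z, a z = 0 := integral_eq_zero_of_ae hz
      rw [hamass] at h0
      norm_num at h0
  -- carve out a positive measure subset of Tset
  obtain ⟨N, hNsub, hNm, hN0⟩ := exists_measurable_superset_of_null (ae_iff.mp haez)
  set A' : Set (Fin d → ℝ) := {z | a z ≠ 0} \ N with hA'def
  have hA'm : MeasurableSet A' :=
    ((hameas (measurableSet_singleton 0)).compl).diff hNm
  have hA'pos : 0 < volume A' := by
    rw [hA'def, measure_diff_null hN0]
    exact hApos
  have hA'sub : A' ⊆ Tset := by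
    intro z hz
    obtain ⟨hz1, hz2⟩ := hz
    have hnn : ¬ ¬ (a z = 0 ∨ ∀ᵐ ξ ∂(volume : Measure (Fin d → ℝ)), v (ξ - z) = v ξ) :=
      fun h => hz2 (hNsub h)
    rcases not_not.mp hnn with h | h
    · exact absurd h hz1
    · exact hsub_mem z h

  -- Steinhaus
  have hAA := Measure.sub_mem_nhds_zero_of_addHaar_pos volume A' hA'm hA'pos
  have hTnhds : Tset ∈ nhds (0 : Fin d → ℝ) := by
    refine Filter.mem_of_superset hAA ?_
    rintro x ⟨y, hy, w, hw, rfl⟩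
    have hm := hTadd y (-w) (hA'sub hy) (hTneg _ (hA'sub hw))
    rwa [← sub_eq_add_neg] at hm
  -- Tset is everything
  have hTall : ∀ z : Fin d → ℝ, z ∈ Tset := by
    obtain ⟨ε, hε, hball⟩ := Metric.mem_nhds_iff.mp hTnhds
    intro z
    have hns : ∀ (m : ℕ) (y : Fin d → ℝ), y ∈ Tset → m • y ∈ Tset := by
      intro m
      induction m with
      | zero => intro y _; simpa using hTzero
      | succ n ih =>
          intro y hy
          rw [succ_nsmul]
          exact hTadd _ _ (ih y hy) hy
    rcases eq_or_ne z 0 with rfl | hz0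
    · exact hTzero
    · set n : ℕ := ⌈‖z‖ / ε⌉₊ + 1 with hn
      have hnpos : (0 : ℝ) < n := by positivity
      have hlt : ‖z‖ / ε < n := by
        calc ‖z‖ / ε ≤ ⌈‖z‖ / ε⌉₊ := Nat.le_ceil _
          _ < n := by exact_mod_cast Nat.lt_succ_self _
      have hzlt : ‖z‖ < n * ε := by
        rw [div_lt_iff₀ hε] at hlt
        linarith
      set y : Fin d → ℝ := (n : ℝ)⁻¹ • z with hy
      have hymem : y ∈ Tset := by
        apply hball
        rw [Metric.mem_ball, dist_zero_right, hy, norm_smul, norm_inv, Real.norm_natCast]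
        calc (n : ℝ)⁻¹ * ‖z‖ < (n : ℝ)⁻¹ * (n * ε) := by
              exact mul_lt_mul_of_pos_left hzlt (by positivity)
          _ = ε := by
              rw [← mul_assoc, inv_mul_cancel₀ (ne_of_gt hnpos), one_mul]
      have hzy : n • y = z := by
        rw [← Nat.cast_smul_eq_nsmul ℝ, hy, smul_smul, mul_inv_cancel₀ (ne_of_gt hnpos),
          one_smul]
      rw [← hzy]
      exact hns n y hymem
  -- final Fubini: pick a generic base point
  set Bset : Set ((Fin d → ℝ) × (Fin d → ℝ)) := {p | v (p.2 + p.1) ≠ v p.2} with hBdef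
  have hBm : MeasurableSet Bset :=
    (measurableSet_eq_fun (hvmeas.comp (measurable_snd.add measurable_fst))
      (hvmeas.comp measurable_snd)).compl
  have hB0 : (volume.prod volume) Bset = 0 := by
    rw [Measure.measure_prod_null hBm]
    refine ae_of_all _ fun z => ?_
    have hpr : Prod.mk z ⁻¹' Bset = {ξ | ¬ v (ξ + z) = v ξ} := rfl
    show volume (Prod.mk z ⁻¹' Bset) = 0
    rw [hpr, ← ae_iff]
    have h := hTall z
    rw [hTdef, Set.mem_setOf_eq] at h
    exact h
  have hB0' : (volume.prod volume) (Prod.swap ⁻¹' Bset) = 0 := by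
    rw [Measure.measurePreserving_swap.measure_preimage hBm.nullMeasurableSet]
    exact hB0
  have hBswap : Prod.swap ⁻¹' Bset
      = {p : (Fin d → ℝ) × (Fin d → ℝ) | v (p.1 + p.2) ≠ v p.1} := rfl
  have hfinal : ∀ᵐ ξ ∂(volume : Measure (Fin d → ℝ)),
      volume {z | v (ξ + z) ≠ v ξ} = 0 := by
    rw [hBswap] at hB0'
    have hm : MeasurableSet {p : (Fin d → ℝ) × (Fin d → ℝ) | v (p.1 + p.2) ≠ v p.1} :=
      (measurableSet_eq_fun (hvmeas.comp (measurable_fst.add measurable_snd))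
        (hvmeas.comp measurable_fst)).compl
    have h := (Measure.measure_prod_null hm).mp hB0'
    filter_upwards [h] with ξ hξ
    exact hξ
  -- volume is nonzero
  have hvol_ne : (volume : Measure (Fin d → ℝ)) ≠ 0 := by
    intro h
    have hc : volume (cube d) = 1 := by
      rw [cube, volume_pi_pi]
      simp [Real.volume_Ico]
    rw [h] at hc
    simp at hc
  haveI : (ae (volume : Measure (Fin d → ℝ))).NeBot := ae_neBot.mpr hvol_ne
  obtain ⟨ξ₀, hξ₀⟩ := hfinal.exists
  refine ⟨v ξ₀, ?_⟩
  have hSm : MeasurableSet {η | v η ≠ v ξ₀} :=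
    (measurableSet_eq_fun hvmeas measurable_const).compl
  have hmp : MeasurePreserving (fun z : Fin d → ℝ => ξ₀ + z) volume volume :=
    measurePreserving_add_left volume ξ₀
  rw [ae_iff]
  have hpre2 : (fun z : Fin d → ℝ => ξ₀ + z) ⁻¹' {η | v η ≠ v ξ₀}
      = {z | v (ξ₀ + z) ≠ v ξ₀} := rfl
  calc volume {ξ | ¬ v ξ = v ξ₀}
      = volume ((fun z : Fin d → ℝ => ξ₀ + z) ⁻¹' {η | v η ≠ v ξ₀}) :=
        (hmp.measure_preimage hSm.nullMeasurableSet).symm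
    _ = volume {z | v (ξ₀ + z) ≠ v ξ₀} := by rw [hpre2]
    _ = 0 := hξ₀
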